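/- arXiv:1701.01010 — 4 statements merged into one kernel-verified Lean document; each statement's English description precedes it below -/
import Mathlib

section
/- If Φ : S → T is affine and sufficient for two states s₁, s₂ (i.e. there is an affine recovery map Ψ : T → S with Ψ(Φ(sᵢ)) = sᵢ for i=1,2), and both Φ* and Ψ* map feasible actions to feasible actions, then D_F(Φ(s₁),Φ(s₂)) = D_F(s₁,s₂). -/
/-- A sufficient affine map (one with an affine recovery map), whose dual and whose
recovery map's dual preserve the feasible action sets, preserves the regret. -/
theorem regret_sufficiency {V W : Type*} [AddCommGroup V] [Module ℝ V]
    [AddCommGroup W] [Module ℝ W]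
    (S : Set V) (T : Set W)
    (A : Set (V →ₗ[ℝ] ℝ)) (B : Set (W →ₗ[ℝ] ℝ))
    (F : V → ℝ) (G : W → ℝ)
    (hF : ∀ s ∈ S, IsLUB ((fun a : V →ₗ[ℝ] ℝ => a s) '' A) (F s))
    (hG : ∀ t ∈ T, IsLUB ((fun b : W →ₗ[ℝ] ℝ => b t) '' B) (G t))
    (Φ : V →ᵃ[ℝ] W) (Ψ : W →ᵃ[ℝ] V)
    (hΦT : Set.MapsTo Φ S T) (hΨS : Set.MapsTo Ψ T S)
    (s₁ s₂ : V) (hs₁ : s₁ ∈ S) (hs₂ : s₂ ∈ S)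
    (hrec1 : Ψ (Φ s₁) = s₁) (hrec2 : Ψ (Φ s₂) = s₂)
    (hΦdual : ∀ b ∈ B, ∃ a ∈ A, ∀ s ∈ S, b (Φ s) = a s)
    (hΨdual : ∀ a ∈ A, ∃ b ∈ B, ∀ t ∈ T, a (Ψ t) = b t)
    (hopt : ∃ a ∈ A, a s₂ = F s₂) :
    sInf {x | ∃ b ∈ B, b (Φ s₂) = G (Φ s₂) ∧ x = G (Φ s₁) - b (Φ s₁)} =
      sInf {x | ∃ a ∈ A, a s₂ = F s₂ ∧ x = F s₁ - a s₁} := by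
  -- First, the value functions agree on points recovered by Ψ.
  have key : ∀ s ∈ S, Ψ (Φ s) = s → G (Φ s) = F s := by
    intro s hs hrec
    have hΦs : Φ s ∈ T := hΦT hs
    have hset : ((fun b : W →ₗ[ℝ] ℝ => b (Φ s)) '' B) =
        ((fun a : V →ₗ[ℝ] ℝ => a s) '' A) := by
      apply Set.Subset.antisymm
      · rintro x ⟨b, hb, rfl⟩
        obtain ⟨a, ha, hab⟩ := hΦdual b hb
        exact ⟨a, ha, (hab s hs).symm⟩
      · rintro x ⟨a, ha, rfl⟩
        obtain ⟨b, hb, hab⟩ := hΨdual a ha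
        refine ⟨b, hb, ?_⟩
        show b (Φ s) = a s
        rw [← hab (Φ s) hΦs, hrec]
    exact (hG (Φ s) hΦs).unique (hset ▸ hF s hs)
  have h1 : G (Φ s₁) = F s₁ := key s₁ hs₁ hrec1
  have h2 : G (Φ s₂) = F s₂ := key s₂ hs₂ hrec2
  congr 1
  ext x
  constructor
  · rintro ⟨b, hb, hbopt, rfl⟩
    obtain ⟨a, ha, hab⟩ := hΦdual b hb
    exact ⟨a, ha, by rw [← hab s₂ hs₂, hbopt, h2], by rw [← hab s₁ hs₁, h1]⟩
  · rintro ⟨a, ha, haopt, rfl⟩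
    obtain ⟨b, hb, hab⟩ := hΨdual a ha
    have hb1 : b (Φ s₁) = a s₁ := by rw [← hab (Φ s₁) (hΦT hs₁), hrec1]
    have hb2 : b (Φ s₂) = a s₂ := by rw [← hab (Φ s₂) (hΦT hs₂), hrec2]
    exact ⟨b, hb, by rw [hb2, haopt, h2], by rw [hb1, h1]⟩
end

section
/- If a regret function D_F based on a convex continuous function F on a finite-dimensional convex state space is monotone under all affine self-maps, then F is differentiable (hence D_F is a Bregman divergence). In particular, along every segment the restriction f(t) = F((1-t)s₀ + t s₁) has continuous right derivative, i.e. f is differentiable on (0,1). -/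
open Set Filter Topology

noncomputable def rightDer (f : ℝ → ℝ) (a : ℝ) : ℝ := sInf (slope f a '' Set.Ioo a 1)
noncomputable def leftDer (f : ℝ → ℝ) (a : ℝ) : ℝ := sSup (slope f a '' Set.Ioo 0 a)

section OneDim
variable {f : ℝ → ℝ} {a : ℝ}

lemma slope_mono_aux (hf : ConvexOn ℝ (Icc (0:ℝ) 1) f) (ha : a ∈ Ioo (0:ℝ) 1) :
    MonotoneOn (slope f a) (Icc (0:ℝ) 1 \ {a}) :=
  hf.slope_mono ⟨ha.1.le, ha.2.le⟩

lemma mem_diff_of_Ioo (ha : a ∈ Ioo (0:ℝ) 1) {y : ℝ} (hy : y ∈ Icc (0:ℝ) 1) (hne : y ≠ a) :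
    y ∈ Icc (0:ℝ) 1 \ {a} := ⟨hy, hne⟩

lemma bddBelow_slope (hf : ConvexOn ℝ (Icc (0:ℝ) 1) f) (ha : a ∈ Ioo (0:ℝ) 1) :
    BddBelow (slope f a '' Ioo a 1) := by
  refine ⟨slope f a (a/2), ?_⟩
  rintro _ ⟨z, hz, rfl⟩
  refine slope_mono_aux hf ha ⟨⟨by linarith [ha.1], by linarith [ha.2]⟩, by intro h; simp at h; linarith [ha.1]⟩
    ⟨⟨by linarith [ha.1, hz.1], hz.2.le⟩, by intro h; simp at h; linarith [hz.1]⟩ (by linarith [ha.1, ha.2, hz.1, hz.2])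

lemma bddAbove_slope (hf : ConvexOn ℝ (Icc (0:ℝ) 1) f) (ha : a ∈ Ioo (0:ℝ) 1) :
    BddAbove (slope f a '' Ioo 0 a) := by
  refine ⟨slope f a ((a+1)/2), ?_⟩
  rintro _ ⟨z, hz, rfl⟩
  refine slope_mono_aux hf ha ⟨⟨hz.1.le, by linarith [hz.2, ha.2]⟩, by intro h; simp at h; linarith [hz.2]⟩
    ⟨⟨by linarith [ha.1], by linarith [ha.2]⟩, by intro h; simp at h; linarith [ha.2]⟩
    (by linarith [ha.1, ha.2, hz.1, hz.2])

lemma rightDer_le_slope (hf : ConvexOn ℝ (Icc (0:ℝ) 1) f) (ha : a ∈ Ioo (0:ℝ) 1)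
    {z : ℝ} (hz : z ∈ Ioo a 1) : rightDer f a ≤ slope f a z :=
  csInf_le (bddBelow_slope hf ha) (mem_image_of_mem _ hz)

lemma slope_le_rightDer (hf : ConvexOn ℝ (Icc (0:ℝ) 1) f) (ha : a ∈ Ioo (0:ℝ) 1)
    {y : ℝ} (hy : y ∈ Ioo (0:ℝ) a) : slope f a y ≤ rightDer f a := by
  refine le_csInf (Nonempty.image _ ⟨(a+1)/2, by constructor <;> [linarith [ha.2]; linarith [ha.2]]⟩) ?_
  rintro _ ⟨z, hz, rfl⟩
  refine slope_mono_aux hf ha ⟨⟨hy.1.le, by linarith [hy.2, ha.2]⟩, by intro h; simp at h; linarith [hy.2]⟩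
    ⟨⟨by linarith [ha.1, hz.1], hz.2.le⟩, by intro h; simp at h; linarith [hz.1]⟩ (by linarith [ha.1, ha.2, hy.1, hy.2, hz.1, hz.2])

lemma slope_le_leftDer (hf : ConvexOn ℝ (Icc (0:ℝ) 1) f) (ha : a ∈ Ioo (0:ℝ) 1)
    {y : ℝ} (hy : y ∈ Ioo (0:ℝ) a) : slope f a y ≤ leftDer f a :=
  le_csSup (bddAbove_slope hf ha) (mem_image_of_mem _ hy)

lemma leftDer_le_slope (hf : ConvexOn ℝ (Icc (0:ℝ) 1) f) (ha : a ∈ Ioo (0:ℝ) 1)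
    {z : ℝ} (hz : z ∈ Ioo a 1) : leftDer f a ≤ slope f a z := by
  refine csSup_le (Nonempty.image _ ⟨a/2, by constructor <;> linarith [ha.1]⟩) ?_
  rintro _ ⟨y, hy, rfl⟩
  exact (slope_le_rightDer hf ha hy).trans (rightDer_le_slope hf ha hz)

lemma leftDer_le_rightDer (hf : ConvexOn ℝ (Icc (0:ℝ) 1) f) (ha : a ∈ Ioo (0:ℝ) 1) :
    leftDer f a ≤ rightDer f a := by
  refine le_csInf (Nonempty.image _ ⟨(a+1)/2, by constructor <;> linarith [ha.1, ha.2]⟩) ?_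
  rintro _ ⟨z, hz, rfl⟩
  exact leftDer_le_slope hf ha hz

lemma hasDerivWithinAt_rightDer (hf : ConvexOn ℝ (Icc (0:ℝ) 1) f) (ha : a ∈ Ioo (0:ℝ) 1) :
    HasDerivWithinAt f (rightDer f a) (Ici a) a := by
  have hmono : MonotoneOn (slope f a) (Ioo a 1) := by
    refine (slope_mono_aux hf ha).mono ?_
    intro z hz
    exact ⟨⟨by linarith [ha.1, hz.1], hz.2.le⟩, by intro h; simp at h; linarith [hz.1]⟩
  have htend := hmono.tendsto_nhdsWithin_Ioo_right
    ⟨(a+1)/2, by constructor <;> linarith [ha.1, ha.2]⟩ (bddBelow_slope hf ha)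
  rw [← hasDerivWithinAt_Ioi_iff_Ici]
  rw [hasDerivWithinAt_iff_tendsto_slope' (notMem_Ioi_self)]
  exact htend

lemma hasDerivWithinAt_leftDer (hf : ConvexOn ℝ (Icc (0:ℝ) 1) f) (ha : a ∈ Ioo (0:ℝ) 1) :
    HasDerivWithinAt f (leftDer f a) (Iic a) a := by
  have hmono : MonotoneOn (slope f a) (Ioo 0 a) := by
    refine (slope_mono_aux hf ha).mono ?_
    intro z hz
    exact ⟨⟨hz.1.le, by linarith [hz.2, ha.2]⟩, by intro h; simp at h; linarith [hz.2]⟩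
  have htend := hmono.tendsto_nhdsWithin_Ioo_left
    ⟨a/2, by constructor <;> linarith [ha.1]⟩ (bddAbove_slope hf ha)
  rw [← hasDerivWithinAt_Iio_iff_Iic]
  rw [hasDerivWithinAt_iff_tendsto_slope' (notMem_Iio_self)]
  exact htend

end OneDim

section KeyLemma
variable {f : ℝ → ℝ} {a : ℝ}

lemma derivWithin_reparam (hf : ConvexOn ℝ (Icc (0:ℝ) 1) f) (ha : a ∈ Ioo (0:ℝ) 1)
    {b : ℝ} (hab : a ≤ b) :
    derivWithin (fun t : ℝ => f (a + t*(b-a))) (Icc (0:ℝ) 1) 0 = rightDer f a * (b - a) := by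
  have hfd := hasDerivWithinAt_rightDer hf ha
  have hl : HasDerivWithinAt (fun t : ℝ => a + t*(b-a)) (b-a) (Icc (0:ℝ) 1) 0 :=
    by simpa using (((hasDerivAt_id (0:ℝ)).mul_const (b-a)).const_add a).hasDerivWithinAt (s := Icc (0:ℝ) 1)
  have hmaps : MapsTo (fun t : ℝ => a + t*(b-a)) (Icc (0:ℝ) 1) (Ici a) := by
    intro t ht
    simp only [mem_Ici]
    nlinarith [ht.1, ht.2]
  have hcomp := HasDerivWithinAt.comp_of_eq (x := (0:ℝ)) hfd hl hmaps (by ring)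
  have : (f ∘ fun t : ℝ => a + t*(b-a)) = fun t : ℝ => f (a + t*(b-a)) := rfl
  rw [this] at hcomp
  exact hcomp.derivWithin ((uniqueDiffOn_Icc one_pos) 0 ⟨le_refl 0, zero_le_one⟩)

lemma key (hf : ConvexOn ℝ (Icc (0:ℝ) 1) f) (hc : ContinuousOn f (Icc (0:ℝ) 1))
    (hstar : ∀ r ∈ Ioo (0:ℝ) 1, ∀ t₁ ∈ Ioo (0:ℝ) 1, ∀ t₂ ∈ Ioo (0:ℝ) 1, t₁ < t₂ →
      f (r*t₂) - f (r*t₁) - rightDer f (r*t₁) * (r*t₂ - r*t₁)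
        ≤ f t₂ - f t₁ - rightDer f t₁ * (t₂ - t₁))
    {c : ℝ} (hcI : c ∈ Ioo (0:ℝ) 1) :
    HasDerivAt f (rightDer f c) c := by
  obtain ⟨hc0, hc1⟩ := hcI
  set t₂ : ℝ := (1+c)/2 with ht₂def
  have ht₂ : t₂ ∈ Ioo (0:ℝ) 1 := ⟨by linarith, by linarith⟩
  have hct₂ : c < t₂ := by rw [ht₂def]; linarith
  -- the limiting bound
  have hABound : ∀ r ∈ Ioo (0:ℝ) 1,
      f (r*t₂) - f (r*c) - leftDer f c * (r*t₂ - r*c)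
        ≤ f t₂ - f c - rightDer f c * (t₂ - c) := by
    intro r hr
    have hrc : r*c ∈ Ioo (0:ℝ) 1 := ⟨mul_pos hr.1 hc0, by nlinarith [hr.2, hc1, hr.1]⟩
    have hrlt : r*c < c := by nlinarith [hr.2, hc0]
    have h1 : rightDer f (r*c) ≤ leftDer f c := by
      have h2 : rightDer f (r*c) ≤ slope f (r*c) c :=
        rightDer_le_slope hf hrc ⟨hrlt, hc1⟩
      have h3 : slope f c (r*c) ≤ leftDer f c :=
        slope_le_leftDer hf ⟨hc0, hc1⟩ ⟨hrc.1, hrlt⟩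
      rw [slope_comm] at h2; exact h2.trans h3
    have h4 := hstar r hr c ⟨hc0, hc1⟩ t₂ ht₂ hct₂
    have h5 : 0 ≤ r*t₂ - r*c := by nlinarith [hr.1]
    nlinarith [mul_le_mul_of_nonneg_right h1 h5]
  -- limit as r → 1⁻
  have htendA : Tendsto (fun r : ℝ => f (r*t₂) - f (r*c) - leftDer f c * (r*t₂ - r*c))
      (𝓝[<] (1:ℝ)) (𝓝 (f t₂ - f c - leftDer f c * (t₂ - c))) := by
    have haux : ∀ d ∈ Icc (0:ℝ) 1, Tendsto (fun r : ℝ => f (r*d)) (𝓝[<] (1:ℝ)) (𝓝 (f d)) := by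
      intro d hd
      have hmul : Tendsto (fun r : ℝ => r*d) (𝓝[<] (1:ℝ)) (𝓝[Icc 0 1] d) := by
        rw [tendsto_nhdsWithin_iff]
        constructor
        · have := (continuous_mul_right d).tendsto (1:ℝ)
          simpa using this.mono_left nhdsWithin_le_nhds
        · filter_upwards [Ioo_mem_nhdsLT_of_mem (by norm_num : (1:ℝ) ∈ Ioc (0:ℝ) 1)] with r hr
          exact ⟨mul_nonneg hr.1.le hd.1, by nlinarith [hr.2, hd.1, hd.2]⟩
      exact (hc d hd).tendsto.comp hmul
    have h1 := haux t₂ ⟨ht₂.1.le, ht₂.2.le⟩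
    have h2 := haux c ⟨hc0.le, hc1.le⟩
    have h3 : Tendsto (fun r : ℝ => leftDer f c * (r*t₂ - r*c)) (𝓝[<] (1:ℝ))
        (𝓝 (leftDer f c * (t₂ - c))) := by
      have : Tendsto (fun r : ℝ => leftDer f c * (r*t₂ - r*c)) (𝓝 (1:ℝ))
          (𝓝 (leftDer f c * (1*t₂ - 1*c))) :=
        (continuous_const.mul ((continuous_mul_right t₂).sub (continuous_mul_right c))).tendsto 1
      simpa using this.mono_left nhdsWithin_le_nhds
    exact (h1.sub h2).sub h3
  have hlim : f t₂ - f c - leftDer f c * (t₂ - c) ≤ f t₂ - f c - rightDer f c * (t₂ - c) := by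
    refine le_of_tendsto htendA ?_
    filter_upwards [Ioo_mem_nhdsLT_of_mem (by norm_num : (1:ℝ) ∈ Ioc (0:ℝ) 1)] with r hr
    exact hABound r hr
  have heq : leftDer f c = rightDer f c := by
    have h1 := leftDer_le_rightDer hf ⟨hc0, hc1⟩
    have h2 : rightDer f c ≤ leftDer f c := by
      have ht : (0:ℝ) < t₂ - c := by linarith
      nlinarith
    linarith
  have hL := hasDerivWithinAt_leftDer hf ⟨hc0, hc1⟩
  rw [heq] at hL
  have hunion := hL.union (hasDerivWithinAt_rightDer hf ⟨hc0, hc1⟩)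
  rw [Iic_union_Ici] at hunion
  rwa [hasDerivWithinAt_univ] at hunion

end KeyLemma

lemma aux_fderiv {V : Type*} [NormedAddCommGroup V] [NormedSpace ℝ V] [FiniteDimensional ℝ V]
    {S : Set V} {F : V → ℝ} (hF : ConvexOn ℝ S F) {x : V} (hx : x ∈ interior S)
    (hdir : ∀ v : V, ∃ g : ℝ, HasDerivAt (fun u : ℝ => F (x + u • v)) g 0) :
    DifferentiableAt ℝ F x := by
  classical
  by_cases hV : Subsingleton V
  · have h0 : (fun h : V => F (x + h) - F x - (0 : V →L[ℝ] ℝ) h) = fun _ => (0:ℝ) := by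
      funext h
      have hh : h = 0 := Subsingleton.elim _ _
      simp [hh]
    have : HasFDerivAt F (0 : V →L[ℝ] ℝ) x := by
      rw [hasFDerivAt_iff_isLittleO_nhds_zero, h0]
      exact Asymptotics.isLittleO_zero _ _
    exact this.differentiableAt
  have : Nontrivial V := not_subsingleton_iff_nontrivial.mp hV
  set n := Module.finrank ℝ V with hn
  have hnpos : 0 < n := Module.finrank_pos
  set b : Module.Basis (Fin n) ℝ V := Module.finBasis ℝ V with hb
  choose g hg using fun i : Fin n => hdir (b i)
  set N : ℝ := (n : ℝ) with hN
  have hNpos : (0:ℝ) < N := by rw [hN]; exact_mod_cast hnpos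
  set L : V →L[ℝ] ℝ := LinearMap.toContinuousLinearMap (b.constr ℝ g) with hL
  have hLapply : ∀ v : V, L v = ∑ i, b.repr v i * g i := by
    intro v
    simp only [hL, LinearMap.coe_toContinuousLinearMap', Module.Basis.constr_apply_fintype,
      Module.Basis.equivFun_apply, smul_eq_mul]
  -- coordinate bound
  set K : ℝ := ∑ i : Fin n, ‖LinearMap.toContinuousLinearMap (b.coord i)‖ with hK
  set C : ℝ := K + 1 with hC
  have hCpos : (0:ℝ) < C := by
    have : (0:ℝ) ≤ K := Finset.sum_nonneg fun i _ => norm_nonneg _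
    linarith
  have hcoord : ∀ (v : V) (i : Fin n), |b.repr v i| ≤ C * ‖v‖ := by
    intro v i
    have h1 : |b.repr v i| = ‖LinearMap.toContinuousLinearMap (b.coord i) v‖ := by
      simp [Module.Basis.coord_apply, Real.norm_eq_abs]
    have h2 := (LinearMap.toContinuousLinearMap (b.coord i)).le_opNorm v
    have h3 : ‖LinearMap.toContinuousLinearMap (b.coord i)‖ ≤ C := by
      have := Finset.single_le_sum (f := fun i : Fin n => ‖LinearMap.toContinuousLinearMap (b.coord i)‖)
        (fun i _ => norm_nonneg _) (Finset.mem_univ i)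
      simp only [← hK] at this
      linarith
    calc |b.repr v i| = ‖LinearMap.toContinuousLinearMap (b.coord i) v‖ := h1
      _ ≤ ‖LinearMap.toContinuousLinearMap (b.coord i)‖ * ‖v‖ := h2
      _ ≤ C * ‖v‖ := mul_le_mul_of_nonneg_right h3 (norm_nonneg v)
  suffices hMain : HasFDerivAt F L x from hMain.differentiableAt
  rw [hasFDerivAt_iff_isLittleO_nhds_zero, Asymptotics.isLittleO_iff]
  intro c hc
  set ε₂ : ℝ := c / (N * C) with hε₂
  have hε₂pos : 0 < ε₂ := div_pos hc (mul_pos hNpos hCpos)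
  have hεNC : ε₂ * (N * C) = c := by
    rw [hε₂]; exact div_mul_cancel₀ c (mul_pos hNpos hCpos).ne'
  -- 1-dim little-o estimates
  have hi : ∀ i : Fin n, ∀ᶠ u : ℝ in 𝓝 0, |F (x + u • b i) - F x - u * g i| ≤ ε₂ * |u| := by
    intro i
    have h2 := (hasDerivAt_iff_isLittleO.mp (hg i)).def hε₂pos
    filter_upwards [h2] with u hu
    simpa [Real.norm_eq_abs, sub_zero, smul_eq_mul] using hu
  have hcoordCont : ∀ i : Fin n, Continuous fun v : V => (b.repr v i : ℝ) := by
    intro i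
    have := (LinearMap.toContinuousLinearMap (b.coord i)).continuous
    exact this
  have hSnhds : S ∈ 𝓝 x := Filter.mem_of_superset (isOpen_interior.mem_nhds hx) interior_subset
  -- the packaged eventual predicate
  have hEv : ∀ᶠ v : V in 𝓝 0,
      (∀ i : Fin n, |F (x + (N * b.repr v i) • b i) - F x - (N * b.repr v i) * g i|
          ≤ ε₂ * |N * b.repr v i| ∧ x + (N * b.repr v i) • b i ∈ S) ∧ x + v ∈ S := by
    refine Filter.Eventually.and (Filter.eventually_all.2 fun i => Filter.Eventually.and ?_ ?_) ?_
    · have htend : Filter.Tendsto (fun v : V => N * b.repr v i) (𝓝 0) (𝓝 0) :=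
        (continuous_const.mul (hcoordCont i)).tendsto' 0 0 (by simp)
      exact htend.eventually (hi i)
    · have htend : Filter.Tendsto (fun v : V => x + (N * b.repr v i) • b i) (𝓝 0) (𝓝 x) := by
        apply Continuous.tendsto' _ 0 x (by simp)
        exact continuous_const.add ((continuous_const.mul (hcoordCont i)).smul continuous_const)
      exact htend.eventually hSnhds
    · have htend : Filter.Tendsto (fun v : V => x + v) (𝓝 0) (𝓝 x) :=
        (continuous_const.add continuous_id).tendsto' 0 x (by simp)
      exact htend.eventually hSnhds
  have hEvNeg := (continuous_neg.tendsto' (0:V) 0 (by simp)).eventually hEv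
  -- the one-sided upper estimate
  have upper : ∀ w : V,
      ((∀ i : Fin n, |F (x + (N * b.repr w i) • b i) - F x - (N * b.repr w i) * g i|
          ≤ ε₂ * |N * b.repr w i| ∧ x + (N * b.repr w i) • b i ∈ S) ∧ x + w ∈ S) →
      F (x + w) - F x - L w ≤ c * ‖w‖ := by
    intro w hw
    obtain ⟨hw1, hwS⟩ := hw
    have hsum : x + w = ∑ i : Fin n, (1/N : ℝ) • (x + (N * b.repr w i) • b i) := by
      have h1 : ∀ i : Fin n, (1/N : ℝ) • (x + (N * b.repr w i) • b i)
          = (1/N : ℝ) • x + (b.repr w i) • b i := by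
        intro i
        rw [smul_add, smul_smul]
        congr 2
        field_simp
      rw [Finset.sum_congr rfl fun i _ => h1 i, Finset.sum_add_distrib, b.sum_repr,
        Finset.sum_const, Finset.card_univ, Fintype.card_fin, ← Nat.cast_smul_eq_nsmul ℝ,
        smul_smul, ← hN]
      rw [mul_one_div, div_self (ne_of_gt hNpos), one_smul]
    have hJ := hF.map_sum_le (t := Finset.univ)
      (fun i _ => by positivity : ∀ i ∈ Finset.univ, (0:ℝ) ≤ 1/N)
      (by rw [Finset.sum_const, Finset.card_univ, Fintype.card_fin, nsmul_eq_mul]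
          field_simp; rfl : (∑ _i : Fin n, (1/N : ℝ)) = 1)
      (fun i _ => (hw1 i).2)
    rw [← hsum] at hJ
    have hbound : ∀ i : Fin n, (1/N : ℝ) • F (x + (N * b.repr w i) • b i)
        ≤ (1/N) * (F x + (N * b.repr w i) * g i + ε₂ * (N * (C * ‖w‖))) := by
      intro i
      have h1 := (abs_le.mp (hw1 i).1).2
      have habs : |N * b.repr w i| ≤ N * (C * ‖w‖) := by
        rw [abs_mul, abs_of_pos hNpos]
        exact mul_le_mul_of_nonneg_left (hcoord w i) hNpos.le
      have h2 : ε₂ * |N * b.repr w i| ≤ ε₂ * (N * (C * ‖w‖)) :=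
        mul_le_mul_of_nonneg_left habs hε₂pos.le
      rw [smul_eq_mul]
      have h3 : F (x + (N * b.repr w i) • b i)
          ≤ F x + (N * b.repr w i) * g i + ε₂ * (N * (C * ‖w‖)) := by linarith
      exact mul_le_mul_of_nonneg_left h3 (by positivity)
    have hto := hJ.trans (Finset.sum_le_sum fun i _ => hbound i)
    have hRHS : ∑ i : Fin n, (1/N : ℝ) * (F x + (N * b.repr w i) * g i + ε₂ * (N * (C * ‖w‖)))
        = F x + L w + ε₂ * (N * (C * ‖w‖)) := by
      have expand : ∀ i ∈ Finset.univ, (1/N:ℝ) * (F x + (N * b.repr w i) * g i + ε₂ * (N * (C * ‖w‖)))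
          = (1/N) * (F x + ε₂ * (N * (C * ‖w‖))) + b.repr w i * g i := by
        intro i _
        field_simp
        ring
      rw [Finset.sum_congr rfl expand, Finset.sum_add_distrib, Finset.sum_const,
        Finset.card_univ, Fintype.card_fin, nsmul_eq_mul, ← hLapply, ← hN]
      field_simp
      ring
    rw [hRHS] at hto
    have hfin : ε₂ * (N * (C * ‖w‖)) = c * ‖w‖ := by rw [← hεNC]; ring
    linarith
  filter_upwards [hEv, hEvNeg] with v hv hvneg
  have hup1 := upper v hv
  have hup2 := upper (-v) hvneg
  have hmid : F x ≤ (1/2) * F (x + v) + (1/2) * F (x + -v) := by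
    have h := hF.2 hv.2 hvneg.2 (by norm_num : (0:ℝ) ≤ 1/2) (by norm_num : (0:ℝ) ≤ 1/2)
      (by norm_num : (1/2:ℝ) + 1/2 = 1)
    have hcomb : (1/2 : ℝ) • (x + v) + (1/2 : ℝ) • (x + -v) = x := by module
    rw [hcomb] at h
    simpa [smul_eq_mul] using h
  have hLneg : L (-v) = - L v := map_neg L v
  rw [hLneg, norm_neg] at hup2
  rw [Real.norm_eq_abs, abs_le]
  constructor
  · linarith
  · linarith

/-- If the regret of `F` (defined along segments via right derivatives) is monotone
under all affine self-maps of the state space, then `F` is differentiable: along every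
segment the restriction is differentiable on `(0,1)`, and `F` is differentiable on the
interior of the state space. -/
theorem monotone_regret_implies_differentiable {V : Type*} [NormedAddCommGroup V]
    [NormedSpace ℝ V] [FiniteDimensional ℝ V]
    (S : Set V) (hS : Convex ℝ S) (F : V → ℝ) (hF : ConvexOn ℝ S F)
    (hcont : ContinuousOn F S)
    (hmono : ∀ Φ : V →ᵃ[ℝ] V, Set.MapsTo Φ S S → ∀ s₁ ∈ S, ∀ s₀ ∈ S,
      F ((1 - (1:ℝ)) • (Φ s₀) + (1:ℝ) • (Φ s₁))
          - F ((1 - (0:ℝ)) • (Φ s₀) + (0:ℝ) • (Φ s₁))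
          - derivWithin (fun t : ℝ => F ((1 - t) • (Φ s₀) + t • (Φ s₁))) (Set.Icc 0 1) 0
        ≤ F ((1 - (1:ℝ)) • s₀ + (1:ℝ) • s₁)
          - F ((1 - (0:ℝ)) • s₀ + (0:ℝ) • s₁)
          - derivWithin (fun t : ℝ => F ((1 - t) • s₀ + t • s₁)) (Set.Icc 0 1) 0) :
    (∀ s₀ ∈ S, ∀ s₁ ∈ S, ∀ t ∈ Set.Ioo (0:ℝ) 1,
        DifferentiableAt ℝ (fun t : ℝ => F ((1 - t) • s₀ + t • s₁)) t) ∧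
      DifferentiableOn ℝ F (interior S) := by
  have part1 : ∀ s₀ ∈ S, ∀ s₁ ∈ S, ∀ t ∈ Set.Ioo (0:ℝ) 1,
      DifferentiableAt ℝ (fun t : ℝ => F ((1 - t) • s₀ + t • s₁)) t := by
    intro s₀ hs₀ s₁ hs₁ c hcI
    set p : ℝ → V := fun t => (1 - t) • s₀ + t • s₁ with hp
    set f : ℝ → ℝ := fun t => F (p t) with hfdef
    have hpmem : ∀ t ∈ Icc (0:ℝ) 1, p t ∈ S := by
      intro t ht
      exact hS hs₀ hs₁ (by linarith [ht.2]) ht.1 (by ring)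
    have hpcomb : ∀ a b u : ℝ, (1 - u) • p a + u • p b = p (a + u*(b-a)) := by
      intro a b u
      simp only [hp]
      module
    have hfconv : ConvexOn ℝ (Icc (0:ℝ) 1) f := by
      refine ⟨convex_Icc 0 1, ?_⟩
      intro x hx y hy a b ha hb hab
      have hb' : b = 1 - a := by linarith
      subst hb'
      have hcomb : a • x + (1-a) • y = x + (1-a)*(y-x) := by simp [smul_eq_mul]; ring
      have hpc : p (a • x + (1-a) • y) = a • p x + (1-a) • p y := by
        rw [hcomb, ← hpcomb]
        module
      show F (p (a • x + (1-a) • y)) ≤ a • F (p x) + (1-a) • F (p y)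
      rw [hpc]
      exact hF.2 (hpmem x hx) (hpmem y hy) ha hb (by linarith)
    have hpcont : Continuous p := by
      simp only [hp]
      fun_prop
    have hfcont : ContinuousOn f (Icc (0:ℝ) 1) :=
      hcont.comp hpcont.continuousOn (fun t ht => hpmem t ht)
    -- derive hstar
    have hstar : ∀ r ∈ Ioo (0:ℝ) 1, ∀ t₁ ∈ Ioo (0:ℝ) 1, ∀ t₂ ∈ Ioo (0:ℝ) 1, t₁ < t₂ →
        f (r*t₂) - f (r*t₁) - rightDer f (r*t₁) * (r*t₂ - r*t₁)
          ≤ f t₂ - f t₁ - rightDer f t₁ * (t₂ - t₁) := by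
      intro r hr t₁ ht₁ t₂ ht₂ hlt
      set Φ : V →ᵃ[ℝ] V := AffineMap.homothety s₀ r with hΦ
      have hΦeq : ∀ x : V, Φ x = (1 - r) • s₀ + r • x := by
        intro x
        simp only [hΦ, AffineMap.homothety_apply, vsub_eq_sub, vadd_eq_add]
        module
      have hmaps : MapsTo Φ S S := by
        intro x hx
        rw [hΦeq]
        exact hS hs₀ hx (by linarith [hr.2]) hr.1.le (by ring)
      have hΦp : ∀ t : ℝ, Φ (p t) = p (r*t) := by
        intro t
        rw [hΦeq]
        simp only [hp]
        module
      have H := hmono Φ hmaps (p t₂) (hpmem t₂ ⟨ht₂.1.le, ht₂.2.le⟩) (p t₁) (hpmem t₁ ⟨ht₁.1.le, ht₁.2.le⟩)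
      rw [hΦp t₁, hΦp t₂] at H
      have e1 : ∀ a b : ℝ, (fun t : ℝ => F ((1 - t) • p a + t • p b)) = fun t : ℝ => f (a + t*(b-a)) := by
        intro a b
        funext t
        rw [hpcomb]
      have e2 : ∀ a b : ℝ, F ((1 - (1:ℝ)) • p a + (1:ℝ) • p b) = f b := by
        intro a b
        rw [hpcomb]; norm_num; rfl
      have e3 : ∀ a b : ℝ, F ((1 - (0:ℝ)) • p a + (0:ℝ) • p b) = f a := by
        intro a b
        rw [hpcomb]; norm_num; rfl
      rw [e1, e1, e2, e2, e3, e3] at H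
      have hrt₁ : r * t₁ ∈ Ioo (0:ℝ) 1 := ⟨mul_pos hr.1 ht₁.1, by nlinarith [hr.2, ht₁.2, hr.1]⟩
      have hrle : r * t₁ ≤ r * t₂ := by nlinarith [hr.1]
      rw [derivWithin_reparam hfconv hrt₁ hrle, derivWithin_reparam hfconv ht₁ hlt.le] at H
      convert H using 2 <;> ring
    have hd := key hfconv hfcont hstar hcI
    exact hd.differentiableAt

  refine ⟨part1, ?_⟩
  intro x hx
  have hdir : ∀ v : V, ∃ g : ℝ, HasDerivAt (fun u : ℝ => F (x + u • v)) g 0 := by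
    intro v
    by_cases hv0 : v = 0
    · refine ⟨0, ?_⟩
      have heq : (fun u : ℝ => F (x + u • v)) = fun _ => F x := by
        funext u
        rw [hv0, smul_zero, add_zero]
      rw [heq]
      exact hasDerivAt_const _ _
    · obtain ⟨ε, hεpos, hball⟩ := Metric.isOpen_iff.mp isOpen_interior x hx
      have hvpos : (0:ℝ) < ‖v‖ := norm_pos_iff.mpr hv0
      set δ : ℝ := ε / (2 * ‖v‖) with hδ
      have hδpos : 0 < δ := by positivity
      set s₀ : V := x - δ • v with hs₀def
      set s₁ : V := x + δ • v with hs₁def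
      have hdist : δ * ‖v‖ = ε / 2 := by
        rw [hδ]
        field_simp
      have hs₀ : s₀ ∈ S := by
        refine interior_subset (hball ?_)
        rw [Metric.mem_ball, dist_eq_norm, hs₀def]
        have : x - δ • v - x = -(δ • v) := by abel
        rw [this, norm_neg, norm_smul, Real.norm_eq_abs, abs_of_pos hδpos, hdist]
        linarith
      have hs₁ : s₁ ∈ S := by
        refine interior_subset (hball ?_)
        rw [Metric.mem_ball, dist_eq_norm, hs₁def]
        have : x + δ • v - x = δ • v := by abel
        rw [this, norm_smul, Real.norm_eq_abs, abs_of_pos hδpos, hdist]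
        linarith
      have hdiff := part1 s₀ hs₀ s₁ hs₁ (1/2) ⟨by norm_num, by norm_num⟩
      have hDA := hdiff.hasDerivAt
      have h0 : (0:ℝ)/(2*δ) + 1/2 = 1/2 := by norm_num
      rw [← h0] at hDA
      have hinner : HasDerivAt (fun u : ℝ => u/(2*δ) + 1/2) (1/(2*δ)) 0 := by
        simpa using ((hasDerivAt_id (0:ℝ)).div_const (2*δ)).add_const (1/2 : ℝ)
      have hcomp := hDA.comp 0 hinner
      have heq : ((fun t : ℝ => F ((1 - t) • s₀ + t • s₁)) ∘ fun u : ℝ => u/(2*δ) + 1/2)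
          = fun u : ℝ => F (x + u • v) := by
        funext u
        simp only [Function.comp]
        congr 1
        have hgen : ∀ t : ℝ, (1 - t) • (x - δ • v) + t • (x + δ • v)
            = x + ((2*t - 1) * δ) • v := by
          intro t
          module
        rw [hs₀def, hs₁def, hgen]
        congr 1
        have : (2 * (u/(2*δ) + 1/2) - 1) * δ = u := by
          field_simp
          ring
        rw [this]
      rw [heq] at hcomp
      exact ⟨_, hcomp⟩
  exact (aux_fderiv hF hx hdir).differentiableWithinAt
end

section
/- Shannon's bound: for any probability vector P = (p_a) on a finite alphabet and any integer-valued length function ℓ satisfying Kraft's inequality Σ_a β^{-ℓ(a)} ≤ 1 (β ≥ 2), the expected length satisfies Σ_a ℓ(a) p_a ≥ -Σ_a p_a log_β p_a; moreover there exists such an integer-valued ℓ with Σ_a ℓ(a) p_a ≤ -Σ_a p_a log_β p_a + 1. -/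
/-- Shannon's bounds: any integer-valued length function satisfying Kraft's inequality
has expected length at least the base-`β` entropy, and some such length function has
expected length less than entropy plus one. -/
theorem shannon_bound {A : Type*} [Fintype A] (β : ℕ) (hβ : 2 ≤ β)
    (p : A → ℝ) (hp : ∀ a, 0 < p a) (hp1 : ∑ a, p a = 1) :
    (∀ ℓ : A → ℕ, ∑ a, ((β : ℝ) ^ ℓ a)⁻¹ ≤ 1 →
      -∑ a, p a * Real.logb β (p a) ≤ ∑ a, p a * (ℓ a : ℝ)) ∧
    (∃ ℓ : A → ℕ, ∑ a, ((β : ℝ) ^ ℓ a)⁻¹ ≤ 1 ∧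
      ∑ a, p a * (ℓ a : ℝ) ≤ -∑ a, p a * Real.logb β (p a) + 1) := by
  have hβR : (1:ℝ) < (β:ℝ) := by exact_mod_cast lt_of_lt_of_le one_lt_two hβ
  have hβ0 : (0:ℝ) < (β:ℝ) := by linarith
  have hlogβ : 0 < Real.log β := Real.log_pos hβR
  have hple1 : ∀ a, p a ≤ 1 := by
    intro a
    rw [← hp1]
    exact Finset.single_le_sum (fun b _ => (hp b).le) (Finset.mem_univ a)
  constructor
  · intro ℓ hk
    set q : A → ℝ := fun a => ((β:ℝ) ^ ℓ a)⁻¹ with hq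
    have hq0 : ∀ a, 0 < q a := fun a => by positivity
    have key : ∀ a ∈ Finset.univ (α := A),
        p a * Real.log (q a) - p a * Real.log (p a) ≤ q a - p a := by
      intro a _
      have h1 : Real.log (q a / p a) ≤ q a / p a - 1 :=
        Real.log_le_sub_one_of_pos (div_pos (hq0 a) (hp a))
      have h2 : Real.log (q a / p a) = Real.log (q a) - Real.log (p a) :=
        Real.log_div (hq0 a).ne' (hp a).ne'
      have h3 := mul_le_mul_of_nonneg_left h1 (hp a).le
      rw [h2, mul_sub, mul_sub, mul_div_cancel₀ _ (hp a).ne', mul_one] at h3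
      linarith
    have hsum := Finset.sum_le_sum key
    rw [Finset.sum_sub_distrib] at hsum
    have hsum2 : ∑ a, p a * Real.log (q a) - ∑ a, p a * Real.log (p a) ≤ 0 := by
      rw [Finset.sum_sub_distrib, hp1] at hsum
      linarith
    have hlogq : ∀ a, Real.log (q a) = -(ℓ a : ℝ) * Real.log β := by
      intro a
      rw [hq]
      rw [Real.log_inv, Real.log_pow]
      ring
    rw [Finset.sum_congr rfl (fun a _ => by rw [hlogq a])] at hsum2
    have hrw : ∑ a, p a * (-(ℓ a : ℝ) * Real.log β)
        = -Real.log β * ∑ a, p a * (ℓ a : ℝ) := by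
      rw [Finset.mul_sum]; apply Finset.sum_congr rfl; intro a _; ring
    rw [hrw] at hsum2
    have hlogb : ∑ a, p a * Real.logb β (p a)
        = (∑ a, p a * Real.log (p a)) / Real.log β := by
      rw [Finset.sum_div]; apply Finset.sum_congr rfl; intro a _
      rw [Real.logb]; ring
    rw [hlogb, ← neg_div, div_le_iff₀ hlogβ]
    nlinarith [hsum2]
  · refine ⟨fun a => ⌈Real.logb β (p a)⁻¹⌉₊, ?_, ?_⟩
    · have hterm : ∀ a ∈ Finset.univ (α := A),
          ((β:ℝ) ^ ⌈Real.logb β (p a)⁻¹⌉₊)⁻¹ ≤ p a := by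
        intro a _
        have h1 : (p a)⁻¹ ≤ (β:ℝ) ^ ⌈Real.logb β (p a)⁻¹⌉₊ := by
          have h2 : Real.logb β (p a)⁻¹ ≤ (⌈Real.logb β (p a)⁻¹⌉₊ : ℝ) := Nat.le_ceil _
          calc (p a)⁻¹ = (β:ℝ) ^ (Real.logb β (p a)⁻¹) := by
                rw [Real.rpow_logb hβ0 (ne_of_gt hβR) (inv_pos.mpr (hp a))]
            _ ≤ (β:ℝ) ^ ((⌈Real.logb β (p a)⁻¹⌉₊ : ℝ)) :=
                Real.rpow_le_rpow_of_exponent_le hβR.le h2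
            _ = (β:ℝ) ^ ⌈Real.logb β (p a)⁻¹⌉₊ := by
                rw [Real.rpow_natCast]
        calc ((β:ℝ) ^ ⌈Real.logb β (p a)⁻¹⌉₊)⁻¹ ≤ ((p a)⁻¹)⁻¹ := by
              apply inv_anti₀ (inv_pos.mpr (hp a)) h1
          _ = p a := inv_inv _
      calc ∑ a, ((β:ℝ) ^ ⌈Real.logb β (p a)⁻¹⌉₊)⁻¹ ≤ ∑ a, p a :=
            Finset.sum_le_sum hterm
        _ = 1 := hp1
    · have hterm : ∀ a ∈ Finset.univ (α := A),
          p a * (⌈Real.logb β (p a)⁻¹⌉₊ : ℝ) ≤ p a * (-Real.logb β (p a)) + p a := by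
        intro a _
        have hnn : 0 ≤ Real.logb β (p a)⁻¹ := by
          apply Real.logb_nonneg hβR
          rw [le_inv_comm₀ one_pos (hp a)]
          simpa using hple1 a
        have h2 : (⌈Real.logb β (p a)⁻¹⌉₊ : ℝ) < Real.logb β (p a)⁻¹ + 1 :=
          Nat.ceil_lt_add_one hnn
        have h3 : Real.logb β (p a)⁻¹ = -Real.logb β (p a) := Real.logb_inv _ _
        nlinarith [hp a, h2, h3]
      calc ∑ a, p a * (⌈Real.logb β (p a)⁻¹⌉₊ : ℝ)
          ≤ ∑ a, (p a * (-Real.logb β (p a)) + p a) := Finset.sum_le_sum hterm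
        _ = -∑ a, p a * Real.logb β (p a) + 1 := by
            rw [Finset.sum_add_distrib, hp1, ← Finset.sum_neg_distrib]
            congr 1
            apply Finset.sum_congr rfl; intro a _; ring
end

section
/- If ℓ : A → ℝ satisfies Kraft's inequality Σ_a β^{-ℓ(a)} ≤ 1, then for every n the function ℓ̃(a₁…a_n) = ⌈Σᵢ ℓ(aᵢ)⌉ on Aⁿ is integer valued, satisfies Kraft's inequality over Aⁿ, and |ℓ̃(a₁…a_n)/n - (1/n)Σᵢ ℓ(aᵢ)| ≤ 1/n. Conversely, if for every ε > 0 there exists n and an integer-valued function L : Aⁿ → ℕ satisfying Kraft's inequality with |L(a₁…a_n)/n - (1/n)Σᵢℓ(aᵢ)| ≤ ε for all strings, then Σ_a β^{-ℓ(a)} ≤ 1. -/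
open Real Finset

lemma kraft_sum_pow {A : Type*} [Fintype A] {β : ℝ} (hβ0 : 0 < β) (f : A → ℝ) (n : ℕ) :
    ∑ w : Fin n → A, β ^ (-(∑ i, f (w i))) = (∑ a, β ^ (-(f a))) ^ n := by
  rw [Fintype.sum_pow]
  refine Finset.sum_congr rfl fun w _ => ?_
  rw [← Finset.sum_neg_distrib, Real.rpow_sum_of_pos hβ0]

/-- Kraft's inequality for real-valued length functions via block codes: a real length
function satisfies Kraft's inequality iff it can be approximated by integer-valued
block length functions satisfying Kraft's inequality. -/
theorem kraft_real_blocks {A : Type*} [Fintype A] (β : ℝ) (hβ : 2 ≤ β) (ℓ : A → ℝ) :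
    ((∑ a, β ^ (-(ℓ a)) ≤ 1) →
      ∀ n : ℕ, 0 < n →
        (∑ w : Fin n → A, β ^ (-((⌈∑ i, ℓ (w i)⌉ : ℤ) : ℝ)) ≤ 1) ∧
        ∀ w : Fin n → A,
          |((⌈∑ i, ℓ (w i)⌉ : ℝ)) / n - (1 / n) * ∑ i, ℓ (w i)| ≤ 1 / n) ∧
    ((∀ ε > (0:ℝ), ∃ n : ℕ, 0 < n ∧ ∃ L : (Fin n → A) → ℕ,
        (∑ w : Fin n → A, β ^ (-(L w : ℝ)) ≤ 1) ∧
        ∀ w : Fin n → A, |((L w : ℝ)) / n - (1 / n) * ∑ i, ℓ (w i)| ≤ ε) →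
      ∑ a, β ^ (-(ℓ a)) ≤ 1) := by
  have hβ0 : (0:ℝ) < β := by linarith
  have hβ1 : (1:ℝ) ≤ β := by linarith
  have hnn : (0:ℝ) ≤ ∑ a, β ^ (-(ℓ a)) :=
    Finset.sum_nonneg fun a _ => (Real.rpow_pos_of_pos hβ0 _).le
  constructor
  · intro h n hn
    have hnpos : (0:ℝ) < n := by exact_mod_cast hn
    constructor
    · calc ∑ w : Fin n → A, β ^ (-((⌈∑ i, ℓ (w i)⌉ : ℤ) : ℝ))
          ≤ ∑ w : Fin n → A, β ^ (-(∑ i, ℓ (w i))) := by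
            refine Finset.sum_le_sum fun w _ => ?_
            exact Real.rpow_le_rpow_of_exponent_le hβ1 (by
              have := Int.le_ceil (∑ i, ℓ (w i)); linarith)
        _ = (∑ a, β ^ (-(ℓ a))) ^ n := kraft_sum_pow hβ0 ℓ n
        _ ≤ 1 := pow_le_one₀ hnn h
    · intro w
      have h1 := Int.le_ceil (∑ i, ℓ (w i))
      have h2 := Int.ceil_lt_add_one (∑ i, ℓ (w i))
      have e : ((⌈∑ i, ℓ (w i)⌉ : ℝ)) / n - (1 / n) * ∑ i, ℓ (w i)
          = (((⌈∑ i, ℓ (w i)⌉ : ℝ)) - ∑ i, ℓ (w i)) / n := by ring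
      rw [e, abs_of_nonneg (div_nonneg (by linarith) hnpos.le)]
      gcongr
      linarith
  · intro h
    refine le_of_forall_gt_imp_ge_of_dense fun c hc => ?_
    have hε : (0:ℝ) < Real.logb β c := Real.logb_pos (by linarith) hc
    obtain ⟨n, hn, L, hK, happ⟩ := h _ hε
    set ε := Real.logb β c
    have hnpos : (0:ℝ) < n := by exact_mod_cast hn
    have key : (∑ a, β ^ (-(ℓ a))) ^ n ≤ (β ^ ε) ^ n := by
      calc (∑ a, β ^ (-(ℓ a))) ^ n
          = ∑ w : Fin n → A, β ^ (-(∑ i, ℓ (w i))) := (kraft_sum_pow hβ0 ℓ n).symm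
        _ ≤ ∑ w : Fin n → A, β ^ (-(L w : ℝ)) * β ^ (n * ε) := by
            refine Finset.sum_le_sum fun w _ => ?_
            rw [← Real.rpow_add hβ0]
            refine Real.rpow_le_rpow_of_exponent_le hβ1 ?_
            have h2 := (abs_le.mp (happ w)).2
            have e : ((L w : ℝ)) / n - (1 / n) * ∑ i, ℓ (w i)
                = (((L w : ℝ)) - ∑ i, ℓ (w i)) / n := by ring
            rw [e, div_le_iff₀ hnpos] at h2
            nlinarith
        _ = β ^ (n * ε) * ∑ w : Fin n → A, β ^ (-(L w : ℝ)) := by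
            rw [Finset.mul_sum]
            exact Finset.sum_congr rfl fun w _ => mul_comm _ _
        _ ≤ β ^ (n * ε) * 1 := by
            exact mul_le_mul_of_nonneg_left hK (Real.rpow_nonneg hβ0.le _)
        _ = (β ^ ε) ^ n := by
            rw [mul_one, ← Real.rpow_natCast (β ^ ε) n, ← Real.rpow_mul hβ0.le]
            ring_nf
    have hsum_le : (∑ a, β ^ (-(ℓ a))) ≤ β ^ ε := by
      exact le_of_pow_le_pow_left₀ hn.ne' (Real.rpow_nonneg hβ0.le _) key
    rwa [Real.rpow_logb hβ0 (by linarith) (by linarith)] at hsum_le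
end
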